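/- arXiv:1006.3531 — 5 statements merged into one kernel-verified Lean document; each statement's English description precedes it below -/
import Mathlib

section
/- For any two complex numbers z and w, |e^z − e^w| ≤ (1/2)(|e^z| + |e^w|)·|z − w|. -/
theorem abs_exp_sub_exp_le (z w : ℂ) :
    ‖Complex.exp z - Complex.exp w‖ ≤
      (1 / 2) * (‖Complex.exp z‖ + ‖Complex.exp w‖) *
        ‖z - w‖ := by
  set a := z - w with ha
  set A := ‖Complex.exp z‖ with hA
  set B := ‖Complex.exp w‖ with hB
  set C := ‖a‖ with hC
  have hC0 : 0 ≤ C := norm_nonneg a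
  have hderiv : ∀ t : ℝ, HasDerivAt (fun t : ℝ => Complex.exp (w + t • a))
      (Complex.exp (w + t • a) * a) t := by
    intro t
    simpa using (((hasDerivAt_id t).smul_const a).const_add w).cexp
  have hcont : Continuous fun t : ℝ => Complex.exp (w + t • a) * a := by
    continuity
  have hint : Complex.exp z - Complex.exp w =
      ∫ t in (0:ℝ)..1, Complex.exp (w + t • a) * a := by
    rw [intervalIntegral.integral_eq_sub_of_hasDerivAt (fun t _ => hderiv t)
      (hcont.intervalIntegrable 0 1)]
    norm_num [ha]
  have hbound : ∀ t ∈ Set.Icc (0:ℝ) 1,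
      ‖Complex.exp (w + t • a) * a‖ ≤ ((1 - t) * B + t * A) * C := by
    intro t ht
    rw [norm_mul]
    have h1 : ‖Complex.exp (w + t • a)‖ = Real.exp ((1 - t) * w.re + t * z.re) := by
      rw [Complex.norm_exp]
      congr 1
      simp [ha, Complex.add_re, Complex.sub_re, Complex.smul_re]
      ring
    rw [h1]
    have h2 : Real.exp ((1 - t) * w.re + t * z.re)
        = (Real.exp w.re) ^ (1 - t) * (Real.exp z.re) ^ t := by
      rw [← Real.exp_mul, ← Real.exp_mul, ← Real.exp_add]
      ring_nf
    have h3 : (Real.exp w.re) ^ (1 - t) * (Real.exp z.re) ^ t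
        ≤ (1 - t) * Real.exp w.re + t * Real.exp z.re :=
      Real.geom_mean_le_arith_mean2_weighted (by linarith [ht.2]) ht.1
        (Real.exp_pos _).le (Real.exp_pos _).le (by ring)
    have hAe : A = Real.exp z.re := by rw [hA, Complex.norm_exp]
    have hBe : B = Real.exp w.re := by rw [hB, Complex.norm_exp]
    rw [h2]
    gcongr
    rw [hAe, hBe]
    exact h3
  have hintC : ∫ t in (0:ℝ)..1, ((1 - t) * B + t * A) * C = (1/2) * (A + B) * C := by
    have : (fun t : ℝ => ((1 - t) * B + t * A) * C) = fun t => B * C + t * ((A - B) * C) := by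
      funext t; ring
    open intervalIntegral in
    rw [this, integral_add (intervalIntegrable_const)
      (intervalIntegrable_id.mul_const _),
      integral_mul_const, integral_mul_const, integral_id, integral_const]
    norm_num
    ring
  calc ‖Complex.exp z - Complex.exp w‖
      = ‖∫ t in (0:ℝ)..1, Complex.exp (w + t • a) * a‖ := by rw [hint]
    _ ≤ ∫ t in (0:ℝ)..1, ‖Complex.exp (w + t • a) * a‖ :=
        intervalIntegral.norm_integral_le_integral_norm (by norm_num)
    _ ≤ ∫ t in (0:ℝ)..1, ((1 - t) * B + t * A) * C := by
        apply intervalIntegral.integral_mono_on (by norm_num)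
          (hcont.norm.intervalIntegrable 0 1)
          (by apply Continuous.intervalIntegrable; continuity) hbound
    _ = (1/2) * (A + B) * C := hintC
end

section
/- Under the assumptions that Y_{n1},…,Y_{n r_n} are independent nonnegative integer-valued random variables with min_k P(Y_{nk}=0) ≥ 3/4, and with λ_n = ∑_k P(Y_{nk} ≥ 1), Y_n = ∑_k Y_{nk}, one has d_TV(L(Y_n), Po(λ_n)) ≥ (1/10)·(∏_{k} P(Y_{nk}=0))·∑_{k} [P(Y_{nk} ≥ 2) + P(Y_{nk} ≥ 1)²]. -/
open MeasureTheory ProbabilityTheory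

section AuxLemmas
open Real Finset in

lemma exp_neg_sub_one_sub (q : ℝ) (hq0 : 0 ≤ q) (hq1 : q ≤ 2) :
    q ^ 2 / 4 ≤ Real.exp (-q) - (1 - q) := by
  have h1 : 1 - q / 2 ≤ Real.exp (-(q / 2)) := by
    have := Real.add_one_le_exp (-(q / 2)); linarith
  have h0 : (0:ℝ) ≤ 1 - q / 2 := by linarith
  have h2 : (1 - q / 2) ^ 2 ≤ Real.exp (-(q / 2)) ^ 2 := by
    exact pow_le_pow_left₀ h0 h1 2
  have h3 : Real.exp (-(q / 2)) ^ 2 = Real.exp (-q) := by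
    rw [← Real.exp_nat_mul]; ring_nf
  nlinarith [h2, h3]

lemma prod_sub_prod_ge {ι : Type*} [DecidableEq ι] (t : Finset ι) (f g : ι → ℝ)
    (hg0 : ∀ i, 0 ≤ g i) (hfg : ∀ i, g i ≤ f i) :
    ∑ i ∈ t, (f i - g i) * ∏ j ∈ t.erase i, g j ≤ ∏ i ∈ t, f i - ∏ i ∈ t, g i := by
  induction t using Finset.induction_on with
  | empty => simp
  | insert _ _ ha ih =>
    rename_i a t
    rw [Finset.sum_insert ha, Finset.prod_insert ha, Finset.prod_insert ha,
      Finset.erase_insert ha]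
    have hsum : ∑ i ∈ t, (f i - g i) * ∏ j ∈ (insert a t).erase i, g j
        = g a * ∑ i ∈ t, (f i - g i) * ∏ j ∈ t.erase i, g j := by
      rw [Finset.mul_sum]
      refine Finset.sum_congr rfl fun i hi => ?_
      have hne : a ≠ i := fun h => ha (h ▸ hi)
      rw [Finset.erase_insert_of_ne hne, Finset.prod_insert
        (fun h => ha (Finset.mem_of_mem_erase h))]
      ring
    rw [hsum]
    have hfa : 0 ≤ f a := le_trans (hg0 a) (hfg a)
    have hprodg : 0 ≤ ∏ i ∈ t, g i := Finset.prod_nonneg fun i _ => hg0 i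
    have hsum0 : 0 ≤ ∑ i ∈ t, (f i - g i) * ∏ j ∈ t.erase i, g j :=
      Finset.sum_nonneg fun i _ => mul_nonneg (by linarith [hfg i])
        (Finset.prod_nonneg fun j _ => hg0 j)
    nlinarith [ih, hfg a, hg0 a]

lemma core_ineq {r : ℕ} (q s : Fin r → ℝ) (hq0 : ∀ k, 0 ≤ q k) (hq1 : ∀ k, q k ≤ 1/4)
    (hs0 : ∀ k, 0 ≤ s k) (hsq : ∀ k, s k ≤ q k) :
    (1/10) * (∏ k, (1 - q k)) * ∑ k, (s k + q k ^ 2)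
    ≤ (9/10) * (Real.exp (-(∑ k, q k)) - ∏ k, (1 - q k))
      + (1/10) * ((∑ k, q k) * Real.exp (-(∑ k, q k))
        - ∑ k, (q k - s k) * ∏ j ∈ Finset.univ.erase k, (1 - q j)) := by
  set E := Real.exp (-(∑ k, q k)) with hE
  have hg0 : ∀ k, (0:ℝ) ≤ 1 - q k := fun k => by linarith [hq1 k]
  have hfg : ∀ k, (1:ℝ) - q k ≤ Real.exp (-(q k)) := fun k => by
    have := Real.add_one_le_exp (-(q k)); linarith
  have hPe0 : ∀ k : Fin r, (0:ℝ) ≤ ∏ j ∈ Finset.univ.erase k, (1 - q j) :=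
    fun k => Finset.prod_nonneg fun j _ => hg0 j
  have hPg0 : (0:ℝ) ≤ ∏ k, (1 - q k) := Finset.prod_nonneg fun j _ => hg0 j
  have hEprod : E = ∏ k, Real.exp (-(q k)) := by
    rw [hE, ← Real.exp_sum, ← Finset.sum_neg_distrib]
  have hA : ∑ k, (q k ^ 2 / 4) * ∏ j ∈ Finset.univ.erase k, (1 - q j)
      ≤ E - ∏ k, (1 - q k) := by
    calc ∑ k, (q k ^ 2 / 4) * ∏ j ∈ Finset.univ.erase k, (1 - q j)
        ≤ ∑ k, (Real.exp (-(q k)) - (1 - q k)) * ∏ j ∈ Finset.univ.erase k, (1 - q j) := by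
          refine Finset.sum_le_sum fun k _ => mul_le_mul_of_nonneg_right ?_ (hPe0 k)
          have := exp_neg_sub_one_sub (q k) (hq0 k) (by linarith [hq1 k]); linarith
      _ ≤ ∏ k, Real.exp (-(q k)) - ∏ k, (1 - q k) :=
          prod_sub_prod_ge _ _ _ hg0 hfg
      _ = E - ∏ k, (1 - q k) := by rw [hEprod]
  have hEPg : ∏ k, (1 - q k) ≤ E := by
    rw [hEprod]; exact Finset.prod_le_prod (fun i _ => hg0 i) (fun i _ => hfg i)
  have hprodeq : ∀ k : Fin r, (1 - q k) * ∏ j ∈ Finset.univ.erase k, (1 - q j)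
      = ∏ k, (1 - q k) := fun k =>
    Finset.mul_prod_erase Finset.univ (fun j => 1 - q j) (Finset.mem_univ k)
  have hB : ∑ k, (s k - q k ^ 2) * ∏ j ∈ Finset.univ.erase k, (1 - q j)
      ≤ (∑ k, q k) * E - ∑ k, (q k - s k) * ∏ j ∈ Finset.univ.erase k, (1 - q j) := by
    rw [Finset.sum_mul, ← Finset.sum_sub_distrib]
    refine Finset.sum_le_sum fun k _ => ?_
    have h1 : (1 - q k) * ∏ j ∈ Finset.univ.erase k, (1 - q j) ≤ E := by
      rw [hprodeq k]; exact hEPg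
    have h2 := mul_le_mul_of_nonneg_left h1 (hq0 k)
    nlinarith [hPe0 k]
  have hPgPe : ∀ k : Fin r, (∏ k, (1 - q k)) ≤ ∏ j ∈ Finset.univ.erase k, (1 - q j) := by
    intro k
    rw [← hprodeq k]
    nlinarith [hPe0 k, hq0 k]
  calc (1/10) * (∏ k, (1 - q k)) * ∑ k, (s k + q k ^ 2)
      = ∑ k, (1/10) * (s k + q k ^ 2) * (∏ k, (1 - q k)) := by
        rw [Finset.mul_sum]; exact Finset.sum_congr rfl fun k _ => by ring
    _ ≤ ∑ k, ((9/10) * (q k ^ 2 / 4) + (1/10) * (s k - q k ^ 2))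
          * ∏ j ∈ Finset.univ.erase k, (1 - q j) := by
        refine Finset.sum_le_sum fun k _ => ?_
        have h3 := hPgPe k
        have h4 := hPe0 k
        have h5 : 0 ≤ (1/10) * (s k + q k ^ 2) :=
          mul_nonneg (by norm_num) (by nlinarith [hs0 k, sq_nonneg (q k)])
        calc (1/10) * (s k + q k ^ 2) * (∏ k, (1 - q k))
            ≤ (1/10) * (s k + q k ^ 2) * ∏ j ∈ Finset.univ.erase k, (1 - q j) :=
              mul_le_mul_of_nonneg_left h3 h5
          _ ≤ ((9/10) * (q k ^ 2 / 4) + (1/10) * (s k - q k ^ 2))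
              * ∏ j ∈ Finset.univ.erase k, (1 - q j) :=
              mul_le_mul_of_nonneg_right (by nlinarith [sq_nonneg (q k)]) h4
    _ ≤ (9/10) * (E - ∏ k, (1 - q k))
        + (1/10) * ((∑ k, q k) * E - ∑ k, (q k - s k) * ∏ j ∈ Finset.univ.erase k, (1 - q j)) := by
        have hsplit : ∑ k, ((9/10) * (q k ^ 2 / 4) + (1/10) * (s k - q k ^ 2))
              * ∏ j ∈ Finset.univ.erase k, (1 - q j)
            = (9/10) * ∑ k, (q k ^ 2 / 4) * ∏ j ∈ Finset.univ.erase k, (1 - q j)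
              + (1/10) * ∑ k, (s k - q k ^ 2) * ∏ j ∈ Finset.univ.erase k, (1 - q j) := by
          rw [Finset.mul_sum, Finset.mul_sum, ← Finset.sum_add_distrib]
          exact Finset.sum_congr rfl fun k _ => by ring
        rw [hsplit]
        linarith [hA, hB]


end AuxLemmas

theorem poisson_approx_lower_bound
    {Ω : Type*} [MeasurableSpace Ω] (P : Measure Ω) [IsProbabilityMeasure P]
    (r : ℕ) (Y : Fin r → Ω → ℕ) (hmeas : ∀ k, Measurable (Y k))
    (hindep : iIndepFun Y P)
    (hmin : ∀ k, (3 : ℝ) / 4 ≤ (P {ω | Y k ω = 0}).toReal) :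
    (⨆ A : Set ℕ,
        |(P {ω | (∑ k, Y k ω) ∈ A}).toReal -
          (poissonMeasure (∑ k, (P {ω | 1 ≤ Y k ω}).toNNReal) A).toReal|) ≥
      (1 / 10) * (∏ k, (P {ω | Y k ω = 0}).toReal) *
        ∑ k, ((P {ω | 2 ≤ Y k ω}).toReal + (P {ω | 1 ≤ Y k ω}).toReal ^ 2) := by
  classical
  set q : Fin r → ℝ := fun k => (P {ω | 1 ≤ Y k ω}).toReal with hq
  set s : Fin r → ℝ := fun k => (P {ω | 2 ≤ Y k ω}).toReal with hs
  -- basic set identities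
  have hset0 : ∀ k, {ω | Y k ω = 0} = Y k ⁻¹' {0} := fun k => rfl
  have hset1 : ∀ k, {ω | 1 ≤ Y k ω} = Y k ⁻¹' (Set.Ici 1) := fun k => rfl
  have hset2 : ∀ k, {ω | 2 ≤ Y k ω} = Y k ⁻¹' (Set.Ici 2) := fun k => rfl
  have hmeas0 : ∀ k, MeasurableSet {ω | Y k ω = 0} :=
    fun k => hmeas k (measurableSet_singleton 0)
  have hmeas1 : ∀ k, MeasurableSet {ω | 1 ≤ Y k ω} :=
    fun k => hmeas k measurableSet_Ici
  have hmeas2 : ∀ k, MeasurableSet {ω | 2 ≤ Y k ω} :=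
    fun k => hmeas k measurableSet_Ici
  have hfin : ∀ (A : Set Ω), P A ≠ ⊤ := fun A => measure_ne_top P A
  -- p k = 1 - q k
  have hcompl : ∀ k, {ω | 1 ≤ Y k ω} = {ω | Y k ω = 0}ᶜ := by
    intro k; ext ω; simp [Nat.one_le_iff_ne_zero]
  have hpq : ∀ k, (P {ω | Y k ω = 0}).toReal = 1 - q k := by
    intro k
    have h1 : P {ω | Y k ω = 0} + P {ω | Y k ω = 0}ᶜ = 1 :=
      (measure_add_measure_compl (hmeas0 k)).trans measure_univ
    have h2 := congrArg ENNReal.toReal h1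
    rw [ENNReal.toReal_add (hfin _) (hfin _), ENNReal.toReal_one] at h2
    rw [hq]; simp only [← hcompl k] at h2 ⊢; linarith
  have hq0 : ∀ k, 0 ≤ q k := fun k => ENNReal.toReal_nonneg
  have hq14 : ∀ k, q k ≤ 1/4 := by
    intro k; have := hmin k; rw [hpq k] at this; linarith
  have hs0 : ∀ k, 0 ≤ s k := fun k => ENNReal.toReal_nonneg
  have hsq : ∀ k, s k ≤ q k := by
    intro k
    refine ENNReal.toReal_mono (hfin _) (measure_mono ?_)
    intro ω hω; simp only [Set.mem_setOf_eq] at hω ⊢; omega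
  -- P(Y_n = 0) = ∏ (1 - q k)
  have hmeasC : ∀ (B : Fin r → Set ℕ),
      P (⋂ k, Y k ⁻¹' B k) = ∏ k, P (Y k ⁻¹' B k) := by
    intro B
    exact hindep.meas_iInter fun k => ⟨B k, trivial, rfl⟩
  have hY0set : {ω | (∑ k, Y k ω) = 0} = ⋂ k, Y k ⁻¹' {0} := by
    ext ω; simp [Finset.sum_eq_zero_iff]
  have hP0 : (P {ω | (∑ k, Y k ω) = 0}).toReal = ∏ k, (1 - q k) := by
    rw [hY0set, hmeasC, ENNReal.toReal_prod]
    exact Finset.prod_congr rfl fun k _ => hpq k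
  -- P(Y_n = 1) = ∑ k (q k - s k) ∏_{j≠k} (1 - q j)
  have hsingle : ∀ k, (P (Y k ⁻¹' {1})).toReal = q k - s k := by
    intro k
    have hdisj : Disjoint (Y k ⁻¹' {1}) {ω | 2 ≤ Y k ω} := by
      rw [Set.disjoint_left]; intro ω h1 h2
      simp only [Set.mem_preimage, Set.mem_singleton_iff] at h1
      simp only [Set.mem_setOf_eq] at h2; omega
    have hun : {ω | 1 ≤ Y k ω} = Y k ⁻¹' {1} ∪ {ω | 2 ≤ Y k ω} := by
      ext ω; simp only [Set.mem_setOf_eq, Set.mem_union, Set.mem_preimage,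
        Set.mem_singleton_iff]; omega
    have := measure_union (μ := P) hdisj (hmeas2 k)
    rw [← hun] at this
    have h2 := congrArg ENNReal.toReal this
    rw [ENNReal.toReal_add (hfin _) (hfin _)] at h2
    rw [hq, hs]; simp only at h2 ⊢; linarith
  have hY1set : {ω | (∑ k, Y k ω) = 1}
      = ⋃ k, ⋂ j, Y j ⁻¹' {if j = k then 1 else 0} := by
    ext ω
    simp only [Set.mem_setOf_eq, Set.mem_iUnion, Set.mem_iInter, Set.mem_preimage,
      Set.mem_singleton_iff]
    constructor
    · intro h
      obtain ⟨k, -, hk⟩ : ∃ k ∈ Finset.univ, Y k ω ≠ 0 := by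
        apply Finset.exists_ne_zero_of_sum_ne_zero
        rw [h]; exact one_ne_zero
      refine ⟨k, fun j => ?_⟩
      have hle : Y k ω ≤ 1 := by
        rw [← h]
        exact Finset.single_le_sum (f := fun i => Y i ω) (fun i _ => Nat.zero_le _)
          (Finset.mem_univ k)
      by_cases hj : j = k
      · simp [hj]; omega
      · simp only [hj, if_false]
        have hpair : Y j ω + Y k ω ≤ ∑ i, Y i ω := by
          have hsub : ({j, k} : Finset (Fin r)) ⊆ Finset.univ := Finset.subset_univ _
          have := Finset.sum_le_sum_of_subset hsub (f := fun i => Y i ω)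
          rwa [Finset.sum_pair hj] at this
        omega
    · rintro ⟨k, hk⟩
      have : ∀ j, Y j ω = if j = k then 1 else 0 := hk
      calc ∑ j, Y j ω = ∑ j, if j = k then 1 else 0 :=
            Finset.sum_congr rfl fun j _ => this j
        _ = 1 := by simp
  have hP1 : (P {ω | (∑ k, Y k ω) = 1}).toReal
      = ∑ k, (q k - s k) * ∏ j ∈ Finset.univ.erase k, (1 - q j) := by
    rw [hY1set]
    have hdisj : Pairwise (Function.onFun Disjoint
        fun k => ⋂ j, Y j ⁻¹' {if j = k then 1 else 0}) := by
      intro k k' hne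
      rw [Function.onFun, Set.disjoint_left]
      intro ω h1 h2
      simp only [Set.mem_iInter, Set.mem_preimage, Set.mem_singleton_iff] at h1 h2
      have e1 := h1 k; have e2 := h2 k
      rw [if_pos rfl] at e1
      rw [if_neg hne] at e2
      exact one_ne_zero (e1 ▸ e2 : (1:ℕ) = 0)
    have hmeasT : ∀ k, MeasurableSet (⋂ j, Y j ⁻¹' {if j = k then (1:ℕ) else 0}) :=
      fun k => MeasurableSet.iInter fun j => hmeas j (measurableSet_singleton _)
    rw [measure_iUnion hdisj hmeasT, tsum_fintype, ENNReal.toReal_sum (fun k _ => hfin _)]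
    refine Finset.sum_congr rfl fun k _ => ?_
    rw [hmeasC fun j => {if j = k then 1 else 0}]
    rw [← Finset.mul_prod_erase Finset.univ _ (Finset.mem_univ k)]
    rw [ENNReal.toReal_mul, ENNReal.toReal_prod]
    congr 1
    · rw [if_pos rfl, hsingle k]
    · refine Finset.prod_congr rfl fun j hj => ?_
      rw [if_neg (Finset.ne_of_mem_erase hj), ← hpq j]
      rfl
  -- Poisson masses
  set lam : NNReal := ∑ k, (P {ω | 1 ≤ Y k ω}).toNNReal with hlam
  have hlamR : (lam : ℝ) = ∑ k, q k := by
    rw [hlam, NNReal.coe_sum]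
    rfl
  have hpois : ∀ n : ℕ, ((poissonMeasure lam) {n}).toReal = poissonPMFReal lam n := by
    intro n
    rw [poissonMeasure_singleton]
    exact ENNReal.toReal_ofReal poissonPMFReal_nonneg
  have hpois0 : ((poissonMeasure lam) {0}).toReal = Real.exp (-(∑ k, q k)) := by
    rw [hpois 0, poissonPMFReal, ← hlamR]; simp
  have hpois1 : ((poissonMeasure lam) {1}).toReal
      = (∑ k, q k) * Real.exp (-(∑ k, q k)) := by
    rw [hpois 1, poissonPMFReal, ← hlamR]; simp [mul_comm]
  -- the supremum is bounded above
  have hbdd : BddAbove (Set.range fun A : Set ℕ =>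
      |(P {ω | (∑ k, Y k ω) ∈ A}).toReal - ((poissonMeasure lam) A).toReal|) := by
    refine ⟨2, ?_⟩
    rintro x ⟨A, rfl⟩
    have h1 : (P {ω | (∑ k, Y k ω) ∈ A}).toReal ≤ 1 := by
      have := prob_le_one (μ := P) (s := {ω | (∑ k, Y k ω) ∈ A})
      simpa using ENNReal.toReal_mono ENNReal.one_ne_top this
    have h2 : ((poissonMeasure lam) A).toReal ≤ 1 := by
      have := prob_le_one (μ := poissonMeasure lam) (s := A)
      simpa using ENNReal.toReal_mono ENNReal.one_ne_top this
    have h3 : 0 ≤ (P {ω | (∑ k, Y k ω) ∈ A}).toReal := ENNReal.toReal_nonneg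
    have h4 : 0 ≤ ((poissonMeasure lam) A).toReal := ENNReal.toReal_nonneg
    rw [abs_sub_le_iff]; constructor <;> linarith
  have hle0 := le_ciSup hbdd ({0} : Set ℕ)
  have hle1 := le_ciSup hbdd ({1} : Set ℕ)
  have hA0 : {ω | (∑ k, Y k ω) ∈ ({0} : Set ℕ)} = {ω | (∑ k, Y k ω) = 0} := rfl
  have hA1 : {ω | (∑ k, Y k ω) ∈ ({1} : Set ℕ)} = {ω | (∑ k, Y k ω) = 1} := rfl
  rw [hA0] at hle0
  rw [hA1] at hle1
  -- abs lower bounds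
  have habs0 : Real.exp (-(∑ k, q k)) - ∏ k, (1 - q k)
      ≤ |(P {ω | (∑ k, Y k ω) = 0}).toReal - ((poissonMeasure lam) {0}).toReal| := by
    rw [hP0, hpois0]
    have := neg_le_abs ((∏ k, (1 - q k)) - Real.exp (-(∑ k, q k)))
    linarith
  have habs1 : (∑ k, q k) * Real.exp (-(∑ k, q k))
        - ∑ k, (q k - s k) * ∏ j ∈ Finset.univ.erase k, (1 - q j)
      ≤ |(P {ω | (∑ k, Y k ω) = 1}).toReal - ((poissonMeasure lam) {1}).toReal| := by
    rw [hP1, hpois1]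
    have := neg_le_abs ((∑ k, (q k - s k) * ∏ j ∈ Finset.univ.erase k, (1 - q j))
      - (∑ k, q k) * Real.exp (-(∑ k, q k)))
    linarith
  -- assemble
  have hcore := core_ineq q s hq0 hq14 hs0 hsq
  have hrw : (∏ k, (P {ω | Y k ω = 0}).toReal) = ∏ k, (1 - q k) :=
    Finset.prod_congr rfl fun k _ => hpq k
  rw [ge_iff_le, hrw]
  calc (1/10) * (∏ k, (1 - q k)) * ∑ k, (s k + q k ^ 2)
      ≤ (9/10) * (Real.exp (-(∑ k, q k)) - ∏ k, (1 - q k))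
        + (1/10) * ((∑ k, q k) * Real.exp (-(∑ k, q k))
          - ∑ k, (q k - s k) * ∏ j ∈ Finset.univ.erase k, (1 - q j)) := hcore
    _ ≤ ⨆ A : Set ℕ,
        |(P {ω | (∑ k, Y k ω) ∈ A}).toReal - ((poissonMeasure lam) A).toReal| := by
        have h0 := le_trans habs0 hle0
        have h1 := le_trans habs1 hle1
        linarith
end

section
/- With p_{nk} = P(Y_{nk}=0) for independent nonnegative integer-valued Y_{n1},…,Y_{n r_n}, Y_n = ∑_k Y_{nk} and λ_n = ∑_k (1−p_{nk}), one has |e^{−λ_n} − ∏_{k=1}^{r_n} p_{nk}| = P(Po(λ_n)=0) − P(Y_n=0) ≥ (1/3)·(∏_k p_{nk})·∑_k (1−p_{nk})². -/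
open MeasureTheory ProbabilityTheory Finset

lemma exp_neg_lb {t : ℝ} (h0 : 0 ≤ t) (h1 : t ≤ 1) :
    1 - t + t ^ 2 / 3 ≤ Real.exp (-t) := by
  have hx : |(-t : ℝ)| ≤ 1 := by rw [abs_neg, abs_of_nonneg h0]; exact h1
  have hb := Real.exp_bound hx (n := 5) (by norm_num)
  rw [abs_le] at hb
  have h := hb.1
  simp [Finset.sum_range_succ] at h
  rw [abs_of_nonneg h0] at h
  simp [Nat.factorial] at h
  ring_nf at h ⊢
  nlinarith [pow_nonneg h0 2, pow_nonneg h0 3, pow_nonneg h0 4, pow_nonneg h0 5,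
    mul_nonneg (mul_nonneg h0 h0) (sub_nonneg.2 h1),
    mul_nonneg (pow_nonneg h0 3) (sub_nonneg.2 h1),
    mul_nonneg (pow_nonneg h0 4) (sub_nonneg.2 h1)]

lemma prod_sub_prod_ge_s12 {ι : Type*} [DecidableEq ι] (s : Finset ι) (x y : ι → ℝ)
    (hy : ∀ i, 0 ≤ y i) (hxy : ∀ i, y i ≤ x i) (hx1 : ∀ i, x i ≤ 1) :
    (∏ i ∈ s, y i) * ∑ i ∈ s, (x i - y i) ≤ ∏ i ∈ s, x i - ∏ i ∈ s, y i := by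
  induction s using Finset.induction with
  | empty => simp
  | @insert a s ha ih =>
    simp only [Finset.prod_insert ha, Finset.sum_insert ha]
    have hpy : 0 ≤ ∏ i ∈ s, y i := Finset.prod_nonneg fun i _ => hy i
    have hpy1 : ∏ i ∈ s, y i ≤ 1 :=
      Finset.prod_le_one (fun i _ => hy i) (fun i _ => (hxy i).trans (hx1 i))
    have hs : 0 ≤ ∑ i ∈ s, (x i - y i) :=
      Finset.sum_nonneg fun i _ => sub_nonneg.2 (hxy i)
    have hya := hy a
    have hxya := hxy a
    have hxa1 := hx1 a
    have hya1 : y a ≤ 1 := hxya.trans hxa1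
    have h1 : x a * ((∏ i ∈ s, y i) * ∑ i ∈ s, (x i - y i)) ≤
        x a * (∏ i ∈ s, x i - ∏ i ∈ s, y i) :=
      mul_le_mul_of_nonneg_left ih (hya.trans hxya)
    have h2 : y a * ((∏ i ∈ s, y i) * ∑ i ∈ s, (x i - y i)) ≤
        x a * ((∏ i ∈ s, y i) * ∑ i ∈ s, (x i - y i)) :=
      mul_le_mul_of_nonneg_right hxya (mul_nonneg hpy hs)
    have h3 : (x a - y a) * (y a * ∏ i ∈ s, y i) ≤ (x a - y a) * ∏ i ∈ s, y i :=
      mul_le_mul_of_nonneg_left (mul_le_of_le_one_left hpy hya1) (sub_nonneg.2 hxya)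
    nlinarith [h1, h2, h3]

theorem poisson_zero_prob_diff
    {Ω : Type*} [MeasurableSpace Ω] (P : Measure Ω) [IsProbabilityMeasure P]
    (r : ℕ) (Y : Fin r → Ω → ℕ) (hmeas : ∀ k, Measurable (Y k))
    (hindep : iIndepFun Y P) :
    |Real.exp (-(∑ k, (1 - (P {ω | Y k ω = 0}).toReal))) -
        ∏ k, (P {ω | Y k ω = 0}).toReal| =
      Real.exp (-(∑ k, (1 - (P {ω | Y k ω = 0}).toReal))) -
        (P {ω | (∑ k, Y k ω) = 0}).toReal ∧
    Real.exp (-(∑ k, (1 - (P {ω | Y k ω = 0}).toReal))) -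
        (P {ω | (∑ k, Y k ω) = 0}).toReal ≥
      (1 / 3) * (∏ k, (P {ω | Y k ω = 0}).toReal) *
        ∑ k, (1 - (P {ω | Y k ω = 0}).toReal) ^ 2 := by
  set p : Fin r → ℝ := fun k => (P {ω | Y k ω = 0}).toReal with hp
  have hp0 : ∀ k, 0 ≤ p k := fun k => ENNReal.toReal_nonneg
  have hp1 : ∀ k, p k ≤ 1 := fun k => by
    have := prob_le_one (μ := P) (s := {ω | Y k ω = 0})
    simpa [hp] using ENNReal.toReal_le_of_le_ofReal zero_le_one (by simpa using this)
  -- P(sum = 0) = ∏ p k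
  have hset : {ω | (∑ k, Y k ω) = 0} = ⋂ k, Y k ⁻¹' {0} := by
    ext ω
    simp [Finset.sum_eq_zero_iff, Set.mem_iInter]
  have hmeasP : P {ω | (∑ k, Y k ω) = 0} = ∏ k, P {ω | Y k ω = 0} := by
    rw [hset, hindep.meas_iInter (fun i => ⟨{0}, measurableSet_singleton 0, rfl⟩)]
    congr 1
  have hPprod : (P {ω | (∑ k, Y k ω) = 0}).toReal = ∏ k, p k := by
    rw [hmeasP, ENNReal.toReal_prod]
  -- exp as product
  have hexp : Real.exp (-(∑ k, (1 - p k))) = ∏ k, Real.exp (-(1 - p k)) := by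
    rw [← Real.exp_sum]; congr 1; rw [← Finset.sum_neg_distrib]
  set x : Fin r → ℝ := fun k => Real.exp (-(1 - p k)) with hx
  have hxy : ∀ k, p k ≤ x k := fun k => by
    have := exp_neg_lb (sub_nonneg.2 (hp1 k)) (by linarith [hp0 k])
    have h2 : (0:ℝ) ≤ (1 - p k)^2 / 3 := by positivity
    simp only [hx]; nlinarith
  have hx1 : ∀ k, x k ≤ 1 := fun k => by
    simp only [hx]
    rw [Real.exp_le_one_iff]
    linarith [hp1 k]
  have hprodle : ∏ k, p k ≤ ∏ k, x k :=
    Finset.prod_le_prod (fun k _ => hp0 k) (fun k _ => hxy k)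
  have key := prod_sub_prod_ge_s12 Finset.univ x p hp0 hxy hx1
  have hterm : ∀ k, (1 - p k)^2 / 3 ≤ x k - p k := fun k => by
    have := exp_neg_lb (sub_nonneg.2 (hp1 k)) (by linarith [hp0 k])
    simp only [hx]; nlinarith
  have hsum : ∑ k, (1 - p k)^2 / 3 ≤ ∑ k, (x k - p k) :=
    Finset.sum_le_sum fun k _ => hterm k
  have hpyn : 0 ≤ ∏ k, p k := Finset.prod_nonneg fun k _ => hp0 k
  constructor
  · rw [hPprod, hexp, abs_of_nonneg (by linarith)]
  · rw [hPprod, hexp]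
    have h1 : (∏ k, p k) * ∑ k, (1 - p k)^2 / 3 ≤ (∏ k, p k) * ∑ k, (x k - p k) :=
      mul_le_mul_of_nonneg_left hsum hpyn
    have h2 : (1/3 : ℝ) * (∏ k, p k) * ∑ k, (1 - p k)^2
        = (∏ k, p k) * ∑ k, (1 - p k)^2 / 3 := by
      rw [← Finset.sum_div]; ring
    linarith [key, h1, h2.ge, h2.le]
end

section
/- Let n ≥ 2, 0 ≤ m ≤ n−1, λ_{n,j} := ∑_{i=m+1}^{n} (1 − i/n)^j for j ≥ 1, and λ_n := λ_{n,1}. Then for every j ≥ 2, λ_{n,j} ≤ λ_n · (2λ_n/n)^{(j−1)/2}. -/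
open Finset

theorem lambda_nj_bound (n m : ℕ) (hn : 2 ≤ n) (hm : m ≤ n - 1) (j : ℕ) (hj : 2 ≤ j) :
    (∑ i ∈ Finset.Icc (m + 1) n, (1 - (i : ℝ) / n) ^ j) ≤
      (∑ i ∈ Finset.Icc (m + 1) n, (1 - (i : ℝ) / n)) *
        (2 * (∑ i ∈ Finset.Icc (m + 1) n, (1 - (i : ℝ) / n)) / n) ^ (((j : ℝ) - 1) / 2) := by
  have hmn : m + 1 ≤ n := by omega
  have hn0 : (0:ℝ) < n := by positivity
  have hmR : (m:ℝ) + 1 ≤ n := by exact_mod_cast hmn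
  set S := (∑ i ∈ Finset.Icc (m + 1) n, (1 - (i : ℝ) / n)) with hS
  set c : ℝ := ((n : ℝ) - m - 1) / n with hc
  have hc0 : 0 ≤ c := by
    apply div_nonneg _ hn0.le; linarith
  -- exact value of S
  have h2 : Finset.Ico (m+1) (n+1) = Finset.Icc (m+1) n := by
    ext x; simp [Nat.lt_succ_iff]
  have h1 : (∑ i ∈ Finset.range (m+1), i) + (∑ i ∈ Finset.Icc (m+1) n, i)
      = ∑ i ∈ Finset.range (n+1), i := by
    rw [Finset.range_eq_Ico, Finset.range_eq_Ico, ← h2]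
    exact Finset.sum_Ico_consecutive (fun i : ℕ => i) (Nat.zero_le _) (by omega : m + 1 ≤ n + 1)
  have h3 : (∑ i ∈ Finset.range (m+1), i) * 2 = (m+1) * m := by
    simpa using Finset.sum_range_id_mul_two (m+1)
  have h4 : (∑ i ∈ Finset.range (n+1), i) * 2 = (n+1) * n := by
    simpa using Finset.sum_range_id_mul_two (n+1)
  have h1R := congrArg (fun k : ℕ => (k : ℝ)) h1
  have h3R := congrArg (fun k : ℕ => (k : ℝ)) h3
  have h4R := congrArg (fun k : ℕ => (k : ℝ)) h4
  push_cast at h1R h3R h4R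
  have hsumR : (∑ i ∈ Finset.Icc (m+1) n, (i:ℝ)) * 2 = n * (n+1) - m * (m+1) := by
    linarith
  have hcard : (Finset.Icc (m+1) n).card = n - m := by
    rw [Nat.card_Icc]; omega
  have hSval : S = ((n:ℝ) - m) * ((n:ℝ) - m - 1) / (2 * n) := by
    rw [hS, Finset.sum_sub_distrib, Finset.sum_const, hcard,
      nsmul_eq_mul, Nat.cast_sub (by omega), ← Finset.sum_div]
    field_simp
    nlinarith [hsumR]
  -- termwise bounds
  have hterm : ∀ i ∈ Finset.Icc (m+1) n, (0:ℝ) ≤ 1 - (i:ℝ)/n ∧ 1 - (i:ℝ)/n ≤ c := by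
    intro i hi
    simp only [Finset.mem_Icc] at hi
    have ha : (i:ℝ) ≤ n := by exact_mod_cast hi.2
    have hb : (m:ℝ) + 1 ≤ i := by exact_mod_cast hi.1
    have key : 1 - (i:ℝ)/n = ((n:ℝ) - i)/n := by field_simp
    constructor
    · rw [key]; apply div_nonneg (by linarith) hn0.le
    · rw [key, hc]
      exact (div_le_div_iff_of_pos_right hn0).mpr (by linarith)
  -- step 1 : sum of j-th powers ≤ c^(j-1) * S
  have hstep1 : (∑ i ∈ Finset.Icc (m + 1) n, (1 - (i : ℝ) / n) ^ j) ≤ c^(j-1) * S := by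
    rw [hS, Finset.mul_sum]
    apply Finset.sum_le_sum
    intro i hi
    obtain ⟨h0, hlec⟩ := hterm i hi
    calc (1 - (i:ℝ)/n)^j = (1 - (i:ℝ)/n)^(j-1) * (1 - (i:ℝ)/n) := by
          rw [← pow_succ]; congr 1; omega
      _ ≤ c^(j-1) * (1 - (i:ℝ)/n) := by
          apply mul_le_mul_of_nonneg_right (pow_le_pow_left₀ h0 hlec _) h0
  have hS0 : 0 ≤ S := by
    rw [hSval]; apply div_nonneg (by nlinarith) (by positivity)
  -- step 2 : c^(j-1) ≤ (2S/n)^((j-1)/2)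
  have hkey : c^2 ≤ 2 * S / n := by
    have h : 2*S/n = ((n:ℝ)-m)*((n:ℝ)-m-1)/n^2 := by
      rw [hSval]; field_simp
    rw [h, hc, div_pow]
    gcongr
    nlinarith
  have hstep2 : (c:ℝ)^(j-1) ≤ (2 * S / n) ^ (((j : ℝ) - 1) / 2) := by
    have hexp : (0:ℝ) ≤ ((j:ℝ) - 1) / 2 := by
      have : (1:ℝ) ≤ j := by exact_mod_cast le_trans (by norm_num) hj
      linarith
    have e1 : (c:ℝ)^(j-1) = (c^2) ^ (((j:ℝ)-1)/2) := by
      rw [← Real.rpow_natCast c (j-1), ← Real.rpow_natCast c 2,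
        ← Real.rpow_mul hc0]
      congr 1
      rw [Nat.cast_sub (by omega)]
      push_cast
      ring
    rw [e1]
    exact Real.rpow_le_rpow (by positivity) hkey hexp
  calc (∑ i ∈ Finset.Icc (m + 1) n, (1 - (i : ℝ) / n) ^ j) ≤ c^(j-1) * S := hstep1
    _ ≤ (2 * S / n) ^ (((j : ℝ) - 1) / 2) * S := by
        apply mul_le_mul_of_nonneg_right hstep2 hS0
    _ = S * (2 * S / n) ^ (((j : ℝ) - 1) / 2) := by ring
end

section
/- Let n ≥ 2 and 1 ≤ m ≤ n−1 with n − m ≥ 2, and let σ_n² = n·∑_{k=m+1}^{n} (n−k)/k². If m ≤ n/2 − 1 then (1/20)·n²/m ≤ σ_n² ≤ n²/m; if m ≥ n/2 then (1/24)·(n−m)²/n ≤ σ_n² ≤ 2·(n−m)²/n. -/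
set_option maxHeartbeats 1000000
open Finset

lemma tel_sum (f : ℕ → ℝ) (a : ℕ) : ∀ b, a ≤ b →
    ∑ k ∈ Icc (a+1) b, (f k - f (k+1)) = f (a+1) - f (b+1) := by
  intro b hb
  induction b, hb using Nat.le_induction with
  | base => simp
  | succ n hn ih =>
    rw [Finset.sum_Icc_succ_top (by omega), ih]
    ring

lemma lin_sum (m : ℕ) : ∀ n, m ≤ n →
    ∑ k ∈ Icc (m+1) n, ((n:ℝ) - k) = ((n:ℝ) - m) * ((n:ℝ) - m - 1) / 2 := by
  intro n hn
  induction n, hn using Nat.le_induction with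
  | base =>
    rw [Finset.Icc_eq_empty (by omega)]
    simp
  | succ n hn ih =>
    rw [Finset.sum_Icc_succ_top (by omega)]
    have h1 : ∑ k ∈ Icc (m+1) n, ((((n:ℕ)+1 : ℕ):ℝ) - k)
        = ∑ k ∈ Icc (m+1) n, (((n:ℝ) - k) + 1) := by
      apply Finset.sum_congr rfl
      intro k _
      push_cast
      ring
    rw [h1, Finset.sum_add_distrib, ih, Finset.sum_const, Nat.card_Icc]
    have h2 : ((n + 1 - (m+1) : ℕ) : ℝ) = (n:ℝ) - m := by
      rw [Nat.succ_sub_succ, Nat.cast_sub hn]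
    rw [nsmul_eq_mul, h2]
    push_cast
    ring

theorem sigma_sq_bounds (n m : ℕ) (hn : 2 ≤ n) (hm1 : 1 ≤ m) (hm2 : m ≤ n - 1)
    (hnm : 2 ≤ n - m) :
    (((m : ℝ) ≤ (n : ℝ) / 2 - 1 →
        (1 / 20) * (n : ℝ) ^ 2 / m ≤
            (n : ℝ) * ∑ k ∈ Finset.Icc (m + 1) n, ((n : ℝ) - k) / (k : ℝ) ^ 2 ∧
          (n : ℝ) * ∑ k ∈ Finset.Icc (m + 1) n, ((n : ℝ) - k) / (k : ℝ) ^ 2 ≤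
            (n : ℝ) ^ 2 / m)) ∧
    (((n : ℝ) / 2 ≤ (m : ℝ) →
        (1 / 24) * ((n : ℝ) - m) ^ 2 / n ≤
            (n : ℝ) * ∑ k ∈ Finset.Icc (m + 1) n, ((n : ℝ) - k) / (k : ℝ) ^ 2 ∧
          (n : ℝ) * ∑ k ∈ Finset.Icc (m + 1) n, ((n : ℝ) - k) / (k : ℝ) ^ 2 ≤
            2 * ((n : ℝ) - m) ^ 2 / n)) := by
  have hmn : m + 2 ≤ n := by omega
  have hmn' : m ≤ n := by omega
  have hmR : (1:ℝ) ≤ m := by exact_mod_cast hm1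
  have hnR : (2:ℝ) ≤ n := by exact_mod_cast hn
  have hmnR : (m:ℝ) + 2 ≤ n := by exact_mod_cast hmn
  have hm0 : (0:ℝ) < m := by linarith
  have hn0 : (0:ℝ) < n := by linarith
  have hmne : (m:ℝ) ≠ 0 := ne_of_gt hm0
  have hnne : (n:ℝ) ≠ 0 := ne_of_gt hn0
  set S := ∑ k ∈ Finset.Icc (m + 1) n, ((n : ℝ) - k) / (k : ℝ) ^ 2 with hSdef
  have hnonneg : ∀ k ∈ Icc (m+1) n, (0:ℝ) ≤ ((n:ℝ) - k)/(k:ℝ)^2 := by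
    intro k hk
    simp only [Finset.mem_Icc] at hk
    have h1 : (k:ℝ) ≤ n := Nat.cast_le.2 hk.2
    have h2 : (1:ℝ) ≤ k := by exact_mod_cast Nat.le_trans (by omega) hk.1
    apply div_nonneg (by linarith) (by positivity)
  -- general upper bound: S ≤ n * (1/m - 1/n)
  have hupper : S ≤ (n:ℝ) * (1/(m:ℝ) - 1/(n:ℝ)) := by
    have key : ∀ k ∈ Icc (m+1) n, ((n:ℝ) - k)/(k:ℝ)^2 ≤
        (n:ℝ) * ((fun j : ℕ => 1/((j:ℝ)-1)) k - (fun j : ℕ => 1/((j:ℝ)-1)) (k+1)) := by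
      intro k hk
      simp only [Finset.mem_Icc] at hk
      have h1 : (k:ℝ) ≤ n := Nat.cast_le.2 hk.2
      have h2 : (2:ℝ) ≤ k := by exact_mod_cast Nat.le_trans (by omega) hk.1
      simp only
      push_cast
      have e : (1/((k:ℝ)-1) - 1/((k:ℝ)+1-1)) = 1/(((k:ℝ)-1)*(k:ℝ)) := by
        rw [div_sub_div _ _ (by linarith) (by linarith), div_eq_div_iff (by nlinarith) (by nlinarith)]
        ring
      rw [e, mul_one_div, div_le_div_iff₀ (by positivity) (by nlinarith)]
      nlinarith
    have hsum := Finset.sum_le_sum key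
    rw [← Finset.mul_sum, tel_sum (fun j : ℕ => 1/((j:ℝ)-1)) m n hmn'] at hsum
    push_cast at hsum
    have e1 : ((m:ℝ) + 1 - 1) = (m:ℝ) := by ring
    have e2 : ((n:ℝ) + 1 - 1) = (n:ℝ) := by ring
    rw [e1, e2] at hsum
    exact hsum
  constructor
  · -- branch 1 : m ≤ n/2 - 1
    intro hhalf
    have h2m : 2*m + 2 ≤ n := by
      have : (2*(m:ℝ) + 2 : ℝ) ≤ n := by linarith
      exact_mod_cast this
    constructor
    · -- lower bound
      by_cases hc : 4*m ≤ n
      · -- m small : use k in (m, 2m]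
        have hcR : 4*(m:ℝ) ≤ n := by exact_mod_cast hc
        have hsub : Icc (m+1) (2*m) ⊆ Icc (m+1) n :=
          Finset.Icc_subset_Icc_right (by omega)
        have hS2 : ∑ k ∈ Icc (m+1) (2*m), ((n:ℝ) - k)/(k:ℝ)^2 ≤ S :=
          Finset.sum_le_sum_of_subset_of_nonneg hsub
            (fun k hk _ => hnonneg k hk)
        have hkey : ∀ k ∈ Icc (m+1) (2*m),
            (n:ℝ)/(8*(m:ℝ)^2) ≤ ((n:ℝ) - k)/(k:ℝ)^2 := by
          intro k hk
          simp only [Finset.mem_Icc] at hk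
          have h1 : (k:ℝ) ≤ 2*m := by exact_mod_cast hk.2
          have h2 : (1:ℝ) ≤ k := by exact_mod_cast Nat.le_trans (by omega) hk.1
          have h3 : (k:ℝ)^2 ≤ 4*(m:ℝ)^2 := by nlinarith
          have h4 : (n:ℝ)/2 ≤ (n:ℝ) - k := by linarith
          rw [div_le_div_iff₀ (by positivity) (by positivity)]
          nlinarith [mul_le_mul_of_nonneg_left h3 (le_of_lt hn0),
            mul_le_mul_of_nonneg_left h4 (by positivity : (0:ℝ) ≤ 8*(m:ℝ)^2)]
        have hsum := Finset.sum_le_sum hkey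
        rw [Finset.sum_const, Nat.card_Icc] at hsum
        have hcard : (2*m + 1 - (m+1)) = m := by omega
        rw [hcard, nsmul_eq_mul] at hsum
        have e : (m:ℝ) * ((n:ℝ)/(8*(m:ℝ)^2)) = (n:ℝ)/(8*(m:ℝ)) := by
          field_simp
        rw [e] at hsum
        have hfin : (1/20) * (n:ℝ)^2 / m ≤ (n:ℝ) * ((n:ℝ)/(8*(m:ℝ))) := by
          rw [div_le_iff₀ hm0]
          have e2 : (n:ℝ) * ((n:ℝ)/(8*(m:ℝ))) * (m:ℝ) = (n:ℝ)^2/8 := by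
            field_simp
          rw [e2]
          nlinarith [sq_nonneg (n:ℝ)]
        calc (1/20) * (n:ℝ)^2 / m ≤ (n:ℝ) * ((n:ℝ)/(8*(m:ℝ))) := hfin
          _ ≤ (n:ℝ) * S := by
            apply mul_le_mul_of_nonneg_left _ (by positivity)
            linarith
      · -- m large-ish : use k in (m, 7n/10]
        have hm2' : 2 ≤ m := by omega
        set K := 7*n/10 with hKdef
        have hK1 : m ≤ K := by omega
        have hK2 : K ≤ n := by omega
        have hK3 : 10*K ≤ 7*n := by omega
        have hK4 : 14*(m+1) ≤ 10*(K+1) := by omega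
        have hsub : Icc (m+1) K ⊆ Icc (m+1) n :=
          Finset.Icc_subset_Icc_right hK2
        have hS2 : ∑ k ∈ Icc (m+1) K, ((n:ℝ) - k)/(k:ℝ)^2 ≤ S :=
          Finset.sum_le_sum_of_subset_of_nonneg hsub
            (fun k hk _ => hnonneg k hk)
        have hkey : ∀ k ∈ Icc (m+1) K,
            (3*(n:ℝ)/10) * ((fun j : ℕ => 1/(j:ℝ)) k - (fun j : ℕ => 1/(j:ℝ)) (k+1))
              ≤ ((n:ℝ) - k)/(k:ℝ)^2 := by
          intro k hk
          simp only [Finset.mem_Icc] at hk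
          have h1 : (10:ℝ)*k ≤ 7*n := by
            have : 10*k ≤ 7*n := by omega
            exact_mod_cast this
          have h2 : (1:ℝ) ≤ k := by exact_mod_cast Nat.le_trans (by omega) hk.1
          simp only
          push_cast
          have e : (1/(k:ℝ) - 1/((k:ℝ)+1)) = 1/((k:ℝ)*((k:ℝ)+1)) := by
            field_simp
            ring
          rw [e, mul_one_div, div_le_div_iff₀ (by positivity) (by positivity)]
          nlinarith
        have hsum := Finset.sum_le_sum hkey
        rw [← Finset.mul_sum, tel_sum (fun j : ℕ => 1/(j:ℝ)) m K hK1] at hsum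
        push_cast at hsum
        -- 1/(K+1) ≤ 5/(7*(m+1))
        have hK4R : 14*((m:ℝ)+1) ≤ 10*((K:ℝ)+1) := by exact_mod_cast hK4
        have hrec : 1/((K:ℝ)+1) ≤ 5/(7*((m:ℝ)+1)) := by
          rw [div_le_div_iff₀ (by positivity) (by positivity)]
          linarith
        have hrec2 : (2/7) * (2/(3*(m:ℝ))) ≤ (2/7) * (1/((m:ℝ)+1)) := by
          apply mul_le_mul_of_nonneg_left _ (by norm_num)
          rw [div_le_div_iff₀ (by positivity) (by positivity)]
          have : (2:ℝ) ≤ m := by exact_mod_cast hm2'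
          linarith
        have hS3 : 3*(n:ℝ)/10 * ((2/7) * (2/(3*(m:ℝ)))) ≤ S := by
          have : 3*(n:ℝ)/10 * ((2/7) * (2/(3*(m:ℝ)))) ≤
              3*(n:ℝ)/10 * (1/((m:ℝ)+1) - 1/((K:ℝ)+1)) := by
            apply mul_le_mul_of_nonneg_left _ (by positivity)
            have e3 : 1/((m:ℝ)+1) - 5/(7*((m:ℝ)+1)) = (2/7) * (1/((m:ℝ)+1)) := by
              field_simp
              ring
            nlinarith [hrec, hrec2]
          linarith
        have e4 : 3*(n:ℝ)/10 * ((2/7) * (2/(3*(m:ℝ)))) = 2*(n:ℝ)/(35*(m:ℝ)) := by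
          field_simp
          ring
        rw [e4] at hS3
        have hfin : (1/20) * (n:ℝ)^2 / m ≤ (n:ℝ) * (2*(n:ℝ)/(35*(m:ℝ))) := by
          rw [div_le_iff₀ hm0]
          have e5 : (n:ℝ) * (2*(n:ℝ)/(35*(m:ℝ))) * (m:ℝ) = 2*(n:ℝ)^2/35 := by
            field_simp
          rw [e5]
          nlinarith [sq_nonneg (n:ℝ)]
        calc (1/20) * (n:ℝ)^2 / m ≤ (n:ℝ) * (2*(n:ℝ)/(35*(m:ℝ))) := hfin
          _ ≤ (n:ℝ) * S := by
            apply mul_le_mul_of_nonneg_left hS3 (by positivity)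
    · -- upper bound
      have h1 : (n:ℝ) * S ≤ (n:ℝ) * ((n:ℝ) * (1/(m:ℝ) - 1/(n:ℝ))) :=
        mul_le_mul_of_nonneg_left hupper (by positivity)
      have h2 : (n:ℝ) * ((n:ℝ) * (1/(m:ℝ) - 1/(n:ℝ))) = (n:ℝ)^2/m - n := by
        field_simp
      rw [h2] at h1
      linarith
  · -- branch 2 : n/2 ≤ m
    intro hhalf
    have hn2m : n ≤ 2*m := by
      have : (n:ℝ) ≤ 2*m := by linarith
      exact_mod_cast this
    have hlin := lin_sum m n hmn'
    have hd2 : (2:ℝ) ≤ (n:ℝ) - m := by linarith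
    constructor
    · -- lower bound
      have hkey : ∀ k ∈ Icc (m+1) n,
          ((n:ℝ) - k) * ((1:ℝ)/(n:ℝ)^2) ≤ ((n:ℝ) - k)/(k:ℝ)^2 := by
        intro k hk
        simp only [Finset.mem_Icc] at hk
        have h1 : (k:ℝ) ≤ n := Nat.cast_le.2 hk.2
        have h2 : (1:ℝ) ≤ k := by exact_mod_cast Nat.le_trans (by omega) hk.1
        have h3 : (k:ℝ)^2 ≤ (n:ℝ)^2 := by nlinarith
        have h4 : (0:ℝ) ≤ (n:ℝ) - k := by linarith
        rw [mul_one_div, div_le_div_iff₀ (by positivity) (by positivity)]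
        nlinarith [mul_le_mul_of_nonneg_left h3 h4]
      have hsum := Finset.sum_le_sum hkey
      rw [← Finset.sum_mul, hlin] at hsum
      have hfin : (1/24) * ((n:ℝ) - m)^2 / n ≤
          (n:ℝ) * (((n:ℝ) - m) * ((n:ℝ) - m - 1) / 2 * (1/(n:ℝ)^2)) := by
        rw [div_le_iff₀ hn0]
        have e : (n:ℝ) * (((n:ℝ) - m) * ((n:ℝ) - m - 1) / 2 * (1/(n:ℝ)^2)) * (n:ℝ) =
            ((n:ℝ) - m) * ((n:ℝ) - m - 1) / 2 := by
          field_simp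
        rw [e]
        nlinarith [hd2]
      calc (1/24) * ((n:ℝ) - m)^2 / n
          ≤ (n:ℝ) * (((n:ℝ) - m) * ((n:ℝ) - m - 1) / 2 * (1/(n:ℝ)^2)) := hfin
        _ ≤ (n:ℝ) * S := mul_le_mul_of_nonneg_left hsum (by positivity)
    · -- upper bound
      have hkey : ∀ k ∈ Icc (m+1) n,
          ((n:ℝ) - k)/(k:ℝ)^2 ≤ ((n:ℝ) - k) * ((4:ℝ)/(n:ℝ)^2) := by
        intro k hk
        simp only [Finset.mem_Icc] at hk
        have h1 : (k:ℝ) ≤ n := Nat.cast_le.2 hk.2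
        have h2 : (1:ℝ) ≤ k := by exact_mod_cast Nat.le_trans (by omega) hk.1
        have h3 : (n:ℝ) ≤ 2*k := by
          have : n ≤ 2*k := by omega
          exact_mod_cast this
        rw [div_le_iff₀ (by positivity)]
        have h4 : (0:ℝ) ≤ (n:ℝ) - k := by linarith
        have h5 : (n:ℝ)^2 ≤ 4*(k:ℝ)^2 := by nlinarith
        rw [mul_comm ((n:ℝ) - k) _, mul_assoc]
        calc (n:ℝ) - k = ((n:ℝ) - k) * 1 := by ring
          _ ≤ (4:ℝ)/(n:ℝ)^2 * (((n:ℝ) - k) * (k:ℝ)^2) := by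
            rw [div_mul_eq_mul_div, le_div_iff₀ (by positivity)]
            nlinarith
      have hsum := Finset.sum_le_sum hkey
      rw [← Finset.sum_mul, hlin] at hsum
      have h1 : (n:ℝ) * S ≤
          (n:ℝ) * (((n:ℝ) - m) * ((n:ℝ) - m - 1) / 2 * ((4:ℝ)/(n:ℝ)^2)) :=
        mul_le_mul_of_nonneg_left hsum (by positivity)
      have e : (n:ℝ) * (((n:ℝ) - m) * ((n:ℝ) - m - 1) / 2 * ((4:ℝ)/(n:ℝ)^2)) =
          2*(((n:ℝ) - m) * ((n:ℝ) - m - 1)) / n := by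
        field_simp
        ring
      rw [e] at h1
      have h2 : 2*(((n:ℝ) - m) * ((n:ℝ) - m - 1)) / n ≤ 2 * ((n:ℝ) - m)^2 / n := by
        rw [div_le_div_iff₀ hn0 hn0]
        nlinarith
      linarith
end
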